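/- Let X, Y, V, Z be real normed linear spaces, C ⊆ X an open convex set, F : C → Y and G : C → V d.c. mappings, and B : Y × V → Z a continuous bilinear mapping. If both Y and V admit equivalent norms with modulus of convexity of power type 2, then the mapping x ↦ B(F(x), G(x)) is d.c. on C. -/

import Mathlib

open Set Metric Bornology Filter NNReal

/-- `f` is a control function for `F` on the convex set `C`. -/
def IsControlOn {X Y : Type*} [NormedAddCommGroup X] [NormedSpace ℝ X]
    [NormedAddCommGroup Y] [NormedSpace ℝ Y]
    (C : Set X) (F : X → Y) (f : X → ℝ) : Prop :=
  ContinuousOn f C ∧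
    ∀ φ : Y →L[ℝ] ℝ, ‖φ‖ ≤ 1 → ConvexOn ℝ C (fun x => φ (F x) + f x)

/-- `F` is a d.c. (delta-convex) mapping on `C`. -/
def IsDCOn {X Y : Type*} [NormedAddCommGroup X] [NormedSpace ℝ X]
    [NormedAddCommGroup Y] [NormedSpace ℝ Y]
    (C : Set X) (F : X → Y) : Prop :=
  ContinuousOn F C ∧ ∃ f : X → ℝ, IsControlOn C F f

/-- `g` is a d.c. function on `C`: a difference of two continuous convex functions. -/
def IsDCFnOn {X : Type*} [NormedAddCommGroup X] [NormedSpace ℝ X]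
    (C : Set X) (g : X → ℝ) : Prop :=
  ∃ p q : X → ℝ, ContinuousOn p C ∧ ContinuousOn q C ∧
    ConvexOn ℝ C p ∧ ConvexOn ℝ C q ∧ ∀ x ∈ C, g x = p x - q x

/-- `A ⊂⊂ B`: some ε-enlargement of `A` is contained in `B`. -/
def SubSub {X : Type*} [NormedAddCommGroup X] (A B : Set X) : Prop :=
  ∃ ε > (0:ℝ), ∀ a ∈ A, ∀ y : X, ‖y‖ < ε → a + y ∈ B

/-- `N` is an equivalent norm on `Y` with modulus of convexity of power type 2. -/
def IsEquivNormPT2 {Y : Type*} [NormedAddCommGroup Y] [NormedSpace ℝ Y] (N : Y → ℝ) : Prop :=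
  (∀ u v : Y, N (u + v) ≤ N u + N v) ∧
  (∀ (a : ℝ) (u : Y), N (a • u) = |a| * N u) ∧
  (∃ c₁ c₂ : ℝ, 0 < c₁ ∧ 0 < c₂ ∧ ∀ u : Y, c₁ * ‖u‖ ≤ N u ∧ N u ≤ c₂ * ‖u‖) ∧
  (∃ a : ℝ, 0 < a ∧ ∀ ε : ℝ, ε ∈ Set.Ioc (0:ℝ) 2 → ∀ u v : Y,
    N u ≤ 1 → N v ≤ 1 → ε ≤ N (u - v) → a * ε ^ 2 ≤ 1 - N ((2⁻¹ : ℝ) • (u + v)))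

/-- `G` is `C^{1,1}` on `U`: Fréchet differentiable with Lipschitz derivative. -/
def IsC11On {X Y : Type*} [NormedAddCommGroup X] [NormedSpace ℝ X]
    [NormedAddCommGroup Y] [NormedSpace ℝ Y] (U : Set X) (G : X → Y) : Prop :=
  ∃ G' : X → X →L[ℝ] Y, (∀ x ∈ U, HasFDerivAt G (G' x) x) ∧
    ∃ L : NNReal, LipschitzOnWith L G' U

/-- `F` is locally d.c. on `C`: each point of `C` has a convex neighborhood `U`
with `F` d.c. on `U ∩ C`. -/
def LocallyDCOn {X Y : Type*} [NormedAddCommGroup X] [NormedSpace ℝ X]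
    [NormedAddCommGroup Y] [NormedSpace ℝ Y] (C : Set X) (F : X → Y) : Prop :=
  ∀ a ∈ C, ∃ U : Set X, U ∈ nhds a ∧ Convex ℝ U ∧ IsDCOn (U ∩ C) F



lemma aux_convexOn_of_midpoint {X : Type*} [NormedAddCommGroup X] [NormedSpace ℝ X]
    {C : Set X} (hC : Convex ℝ C) {f : X → ℝ} (hf : ContinuousOn f C)
    (hm : ∀ x ∈ C, ∀ y ∈ C, f ((2⁻¹ : ℝ) • (x + y)) ≤ (f x + f y) / 2) :
    ConvexOn ℝ C f := by
  refine ⟨hC, fun x hx y hy a b ha hb hab => ?_⟩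
  obtain ⟨g, hg⟩ : ∃ g : ℝ → ℝ, g = fun t => f (x + t • (y - x)) - (f x + t * (f y - f x)) :=
    ⟨_, rfl⟩
  have hseg : ∀ t ∈ Icc (0:ℝ) 1, x + t • (y - x) ∈ C := fun t ht =>
    hC.add_smul_sub_mem hx hy ht
  have hgc : ContinuousOn g (Icc (0:ℝ) 1) := by
    rw [hg]
    apply ContinuousOn.sub
    · exact hf.comp (by fun_prop) hseg
    · fun_prop
  have hg0 : g 0 = 0 := by rw [hg]; simp
  have hg1 : g 1 = 0 := by rw [hg]; simp
  have hgmid : ∀ s ∈ Icc (0:ℝ) 1, ∀ t ∈ Icc (0:ℝ) 1,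
      g ((s + t) / 2) ≤ (g s + g t) / 2 := by
    intro s hs t ht
    have key := hm _ (hseg s hs) _ (hseg t ht)
    have heq : (2⁻¹ : ℝ) • ((x + s • (y - x)) + (x + t • (y - x)))
        = x + ((s + t)/2) • (y - x) := by
      rw [smul_add]
      match_scalars <;> ring
    rw [heq] at key
    rw [hg]
    simp only []
    linarith
  -- maximum of g on [0,1]
  obtain ⟨t₀, ht₀, hmax⟩ := isCompact_Icc.exists_isMaxOn (s := Icc (0:ℝ) 1)
    (Set.nonempty_Icc.2 zero_le_one) hgc
  have hM : g t₀ ≤ 0 := by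
    by_contra hpos
    push_neg at hpos
    rcases le_total t₀ (1 - t₀) with hle | hle
    · have hu : (0:ℝ) ∈ Icc (0:ℝ) 1 := by constructor <;> norm_num
      have hv : 2 * t₀ ∈ Icc (0:ℝ) 1 := by
        constructor
        · linarith [ht₀.1]
        · linarith
      have := hgmid 0 hu (2 * t₀) hv
      have h2 : (0 + 2 * t₀) / 2 = t₀ := by ring
      rw [h2, hg0] at this
      have hvm := hmax hv
      simp only [IsMaxOn, Set.mem_setOf_eq] at hvm
      linarith
    · have hu : 2 * t₀ - 1 ∈ Icc (0:ℝ) 1 := by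
        constructor
        · linarith
        · linarith [ht₀.2]
      have hv : (1:ℝ) ∈ Icc (0:ℝ) 1 := by constructor <;> norm_num
      have := hgmid (2 * t₀ - 1) hu 1 hv
      have h2 : (2 * t₀ - 1 + 1) / 2 = t₀ := by ring
      rw [h2, hg1] at this
      have hum := hmax hu
      simp only [IsMaxOn, Set.mem_setOf_eq] at hum
      linarith
  have hb' : b ∈ Icc (0:ℝ) 1 := ⟨hb, by linarith⟩
  have hgb : g b ≤ 0 := le_trans (hmax hb') hM
  have heq2 : a • x + b • y = x + b • (y - x) := by
    have : a = 1 - b := by linarith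
    rw [this]; match_scalars <;> ring
  rw [heq2]
  rw [hg] at hgb
  simp only [] at hgb
  have ha' : a = 1 - b := by linarith
  subst ha'
  simp only [smul_eq_mul]
  nlinarith [hgb]


lemma aux_affine_minorant {X : Type*} [NormedAddCommGroup X] [NormedSpace ℝ X]
    {C : Set X} (hCo : IsOpen C) {f : X → ℝ} (hconv : ConvexOn ℝ C f)
    (hcont : ContinuousOn f C) {x₀ : X} (hx₀ : x₀ ∈ C) :
    ∃ (φ : X →L[ℝ] ℝ) (c : ℝ), ∀ x ∈ C, φ x + c ≤ f x := by
  set s : Set (X × ℝ) := {p | p.1 ∈ C ∧ f p.1 < p.2} with hs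
  have hsopen : IsOpen s := by
    have h1 : ContinuousOn (fun p : X × ℝ => p.2 - f p.1) (C ×ˢ (univ : Set ℝ)) := by
      apply ContinuousOn.sub continuous_snd.continuousOn
      exact hcont.comp continuous_fst.continuousOn (fun p hp => hp.1)
    have h2 := h1.isOpen_inter_preimage (t := Ioi (0:ℝ)) ((hCo.prod isOpen_univ)) isOpen_Ioi
    convert h2 using 1
    ext p
    simp only [hs, mem_setOf_eq, mem_inter_iff, mem_prod, mem_univ, and_true, mem_preimage,
      mem_Ioi]
    constructor
    · rintro ⟨h, h'⟩; exact ⟨h, by linarith⟩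
    · rintro ⟨h, h'⟩; exact ⟨h, by linarith⟩
  have hsconv : Convex ℝ s := by
    rintro p ⟨hp1, hp2⟩ q ⟨hq1, hq2⟩ a b ha hb hab
    refine ⟨hconv.1 hp1 hq1 ha hb hab, ?_⟩
    have h3 := hconv.2 hp1 hq1 ha hb hab
    have h4 : a * f p.1 ≤ a * p.2 := mul_le_mul_of_nonneg_left hp2.le ha
    have h5 : b * f q.1 ≤ b * q.2 := mul_le_mul_of_nonneg_left hq2.le hb
    have h6 : a * f p.1 + b * f q.1 < a * p.2 + b * q.2 := by
      rcases eq_or_lt_of_le ha with rfl | ha'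
      · simp only [zero_mul, zero_add]
        have hb1 : b = 1 := by linarith
        rw [hb1] at *; nlinarith
      · have : a * f p.1 < a * p.2 := (mul_lt_mul_iff_right₀ ha').2 hp2
        linarith
    simp only [smul_eq_mul] at h3 ⊢
    calc f (a • p.1 + b • q.1) ≤ a * f p.1 + b * f q.1 := h3
      _ < a * p.2 + b * q.2 := h6
  have hnotmem : ((x₀, f x₀) : X × ℝ) ∉ s := by
    simp [hs]
  obtain ⟨Φ, hΦ⟩ := geometric_hahn_banach_open_point hsconv hsopen hnotmem
  set β : ℝ := Φ (0, 1) with hβdef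
  have hsplit : ∀ (x : X) (t : ℝ), Φ (x, t) = Φ (x, 0) + t * β := by
    intro x t
    have : ((x, t) : X × ℝ) = (x, 0) + t • (0, 1) := by
      simp [Prod.ext_iff]
    rw [this, map_add, map_smul, smul_eq_mul]
  have hβ : β < 0 := by
    have h1 : ((x₀, f x₀ + 1) : X × ℝ) ∈ s := ⟨hx₀, by simp⟩
    have h2 := hΦ _ h1
    rw [hsplit x₀ (f x₀ + 1), hsplit x₀ (f x₀)] at h2
    linarith
  have hkey : ∀ x ∈ C, Φ (x, 0) + f x * β ≤ Φ (x₀, 0) + f x₀ * β := by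
    intro x hx
    have hlt : ∀ t, f x < t → Φ (x, 0) + t * β < Φ (x₀, 0) + f x₀ * β := by
      intro t ht
      have := hΦ (x, t) ⟨hx, ht⟩
      rw [hsplit x t, hsplit x₀ (f x₀)] at this
      exact this
    by_contra hcon
    push_neg at hcon
    have hnb : 0 < -β := by linarith
    obtain ⟨δ, hδdef⟩ : ∃ δ : ℝ,
        δ = (Φ (x, 0) + f x * β - (Φ (x₀, 0) + f x₀ * β)) / -β / 2 := ⟨_, rfl⟩
    have h0 : 0 < Φ (x, 0) + f x * β - (Φ (x₀, 0) + f x₀ * β) := by linarith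
    have hδ : 0 < δ := by rw [hδdef]; exact div_pos (div_pos h0 hnb) (by norm_num)
    have hlt2 := hlt (f x + δ) (by linarith)
    have hδβ : δ * β = -(Φ (x, 0) + f x * β - (Φ (x₀, 0) + f x₀ * β)) / 2 := by
      have hne : β ≠ 0 := ne_of_lt hβ
      rw [hδdef]; field_simp
    nlinarith [hlt2, hδβ, hcon]
  refine ⟨(-β⁻¹) • (Φ.comp (ContinuousLinearMap.inl ℝ X ℝ)),
    β⁻¹ * (Φ (x₀, 0) + f x₀ * β), ?_⟩
  intro x hx
  have h := hkey x hx
  have hβne : β ≠ 0 := ne_of_lt hβ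
  simp only [ContinuousLinearMap.smul_apply, ContinuousLinearMap.coe_comp', Function.comp_apply,
    ContinuousLinearMap.inl_apply, smul_eq_mul]
  have h2 : f x * β ≤ (Φ (x₀, 0) + f x₀ * β) - Φ (x, 0) := by linarith
  have h3 := (div_le_iff_of_neg hβ).mpr h2
  calc -β⁻¹ * Φ (x, 0) + β⁻¹ * (Φ (x₀, 0) + f x₀ * β)
      = ((Φ (x₀, 0) + f x₀ * β) - Φ (x, 0)) / β := by ring
    _ ≤ f x := h3



private lemma aux_scalar_caseB {a' r1 r2 eps e' m m' c : ℝ}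
    (ha' : 0 < a') (ha4 : a' ≤ 4⁻¹) (hc1 : c ≤ a'/2) (hc0 : 0 ≤ c)
    (hr2 : 0 < r2) (hr12 : r2 ≤ r1) (heps0 : 0 ≤ eps) (hmnn : 0 ≤ m) (hm'nn : 0 ≤ m')
    (h34 : (3/4) * eps ≤ e') (he'le : e' ≤ 2 * r2)
    (h1 : a' * e'^2 ≤ r2^2 - r2 * m') (hm'le : m' ≤ r2)
    (hmm' : m ≤ m' + (r1 - r2)/2) :
    m^2 + c * eps^2 ≤ (r1^2 + r2^2)/2 := by
  have hq : r2 * m' ≤ r2^2 - a' * e'^2 := by linarith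
  have he'nn : 0 ≤ e' := le_trans (by linarith) h34
  have hsq : (r2 * m')^2 ≤ (r2^2 - a' * e'^2)^2 :=
    pow_le_pow_left₀ (mul_nonneg hr2.le hm'nn) hq 2
  have he2 : e'^2 ≤ 4 * r2^2 := by nlinarith
  have h4a : 4 * a'^2 ≤ a' := by nlinarith
  have t1 : a'^2 * e'^2 * e'^2 ≤ a'^2 * e'^2 * (4 * r2^2) :=
    mul_le_mul_of_nonneg_left he2 (by positivity)
  have t2 : 4 * a'^2 * (e'^2 * r2^2) ≤ a' * (e'^2 * r2^2) :=
    mul_le_mul_of_nonneg_right h4a (by positivity)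
  have final : r2^2 * m'^2 ≤ r2^2 * (r2^2 - a' * e'^2) := by nlinarith [hsq, t1, t2]
  have h2 : m'^2 ≤ r2^2 - a' * e'^2 :=
    (mul_le_mul_iff_right₀ (show (0:ℝ) < r2^2 by positivity)).mp final
  have hd : 0 ≤ (r1 - r2)/2 := by linarith
  have hmsq : m^2 ≤ (m' + (r1 - r2)/2)^2 := pow_le_pow_left₀ hmnn hmm' 2
  have hdm : (r1 - r2)/2 * m' ≤ (r1 - r2)/2 * r2 := mul_le_mul_of_nonneg_left hm'le hd
  have hm2 : m^2 ≤ r2^2 - a' * e'^2 + (r1 - r2) * r2 + ((r1 - r2)/2)^2 := by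
    nlinarith [hmsq, hdm, h2]
  have hcc : c * eps^2 ≤ (a'/2) * eps^2 := mul_le_mul_of_nonneg_right hc1 (sq_nonneg eps)
  have hs : a' * ((3/4) * eps)^2 ≤ a' * e'^2 :=
    mul_le_mul_of_nonneg_left (pow_le_pow_left₀ (by positivity) h34 2) ha'.le
  have hnn : 0 ≤ a' * eps^2 := mul_nonneg ha'.le (sq_nonneg eps)
  have hs' : a' * (9/16 * eps^2) ≤ a' * e'^2 := by
    calc a' * (9/16 * eps^2) = a' * ((3/4) * eps)^2 := by ring
      _ ≤ a' * e'^2 := hs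
  have hce : c * eps^2 ≤ a' * e'^2 + ((r1 - r2)/2)^2 := by
    have hsq2 : 0 ≤ ((r1 - r2)/2)^2 := sq_nonneg _
    linarith [hcc, hs', hnn, hsq2]
  linarith [hm2, hce, sq_abs (r1 - r2)]

lemma aux_two_uniform {Y : Type*} [NormedAddCommGroup Y] [NormedSpace ℝ Y]
    {N : Y → ℝ} {c₁ a : ℝ}
    (hsub : ∀ u v, N (u + v) ≤ N u + N v)
    (hhom : ∀ (t : ℝ) (u : Y), N (t • u) = |t| * N u)
    (hlb : ∀ u, c₁ * ‖u‖ ≤ N u) (hc₁ : 0 < c₁) (ha : 0 < a)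
    (hmod : ∀ ε : ℝ, ε ∈ Set.Ioc (0:ℝ) 2 → ∀ u v : Y,
      N u ≤ 1 → N v ≤ 1 → ε ≤ N (u - v) → a * ε ^ 2 ≤ 1 - N ((2⁻¹ : ℝ) • (u + v))) :
    ∃ c : ℝ, 0 < c ∧ ∀ u v : Y, (N ((2⁻¹:ℝ) • (u + v)))^2 + c * (N (u - v))^2
      ≤ ((N u)^2 + (N v)^2)/2 := by
  have hNnn : ∀ u, 0 ≤ N u := fun u => le_trans (by positivity) (hlb u)
  have hNneg : ∀ u, N (-u) = N u := fun u => by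
    have := hhom (-1) u; simpa using this
  obtain ⟨a', ha'def⟩ : ∃ a' : ℝ, a' = min a 4⁻¹ := ⟨_, rfl⟩
  have ha' : 0 < a' := by rw [ha'def]; exact lt_min ha (by norm_num)
  have ha4 : a' ≤ 4⁻¹ := by rw [ha'def]; exact min_le_right _ _
  have hmod' : ∀ ε : ℝ, ε ∈ Set.Ioc (0:ℝ) 2 → ∀ u v : Y,
      N u ≤ 1 → N v ≤ 1 → ε ≤ N (u - v) → a' * ε ^ 2 ≤ 1 - N ((2⁻¹ : ℝ) • (u + v)) := by
    intro ε hε u v hu hv hd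
    refine le_trans ?_ (hmod ε hε u v hu hv hd)
    have : a' ≤ a := by rw [ha'def]; exact min_le_left _ _
    nlinarith [sq_nonneg ε]
  refine ⟨min (a'/2) (1/64), lt_min (by positivity) (by norm_num), ?_⟩
  have hc1 : min (a'/2) (1/64) ≤ a'/2 := min_le_left _ _
  have hc2 : min (a'/2) (1/64) ≤ 1/64 := min_le_right _ _
  have hc0 : 0 < min (a'/2) (1/64) := lt_min (by positivity) (by norm_num)
  have key : ∀ u v : Y, N v ≤ N u → (N ((2⁻¹:ℝ) • (u + v)))^2
      + (min (a'/2) (1/64)) * (N (u - v))^2 ≤ ((N u)^2 + (N v)^2)/2 := by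
    intro u v huv
    have hr1 : 0 ≤ N u := hNnn u
    have hr2 : 0 ≤ N v := hNnn v
    have heps0 : 0 ≤ N (u - v) := hNnn _
    have hmnn : 0 ≤ N ((2⁻¹:ℝ) • (u + v)) := hNnn _
    have hmle : N ((2⁻¹:ℝ) • (u + v)) ≤ (N u + N v)/2 := by
      rw [hhom]
      have := hsub u v
      rw [abs_of_pos (by norm_num : (0:ℝ) < 2⁻¹)]
      linarith
    have hepsle : N (u - v) ≤ N u + N v := by
      have := hsub u (-v)
      rw [hNneg] at this
      simpa [sub_eq_add_neg] using this
    rcases le_or_gt (N (u - v)) (8 * ((N u - N v)/2)) with hcase | hcase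
    · -- Case A : ε ≤ 8d
      have hm2 : (N ((2⁻¹:ℝ) • (u + v)))^2 ≤ ((N u + N v)/2)^2 :=
        pow_le_pow_left₀ hmnn hmle 2
      have he2 : (N (u - v))^2 ≤ 64 * ((N u - N v)/2)^2 := by nlinarith
      have hcc : (min (a'/2) (1/64)) * (N (u - v))^2 ≤ (1/64) * (64 * ((N u - N v)/2)^2) := by
        calc (min (a'/2) (1/64)) * (N (u - v))^2 ≤ (1/64) * (N (u - v))^2 :=
              mul_le_mul_of_nonneg_right hc2 (sq_nonneg _)
          _ ≤ (1/64) * (64 * ((N u - N v)/2)^2) := by linarith [he2]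
      nlinarith [hm2, hcc]
    · -- Case B : ε > 8d
      have hd : 0 ≤ (N u - N v)/2 := by linarith
      have heps : 0 < N (u - v) := lt_of_le_of_lt (by linarith) hcase
      have hr2pos : 0 < N v := by
        rcases lt_or_ge 0 (N v) with h | h
        · exact h
        · exfalso
          have hv0 : N v = 0 := le_antisymm h hr2
          have : v = 0 := by
            have h1 := hlb v
            rw [hv0] at h1
            have : ‖v‖ ≤ 0 := by
              by_contra hcon
              push_neg at hcon
              nlinarith
            simpa using le_antisymm this (norm_nonneg v)
          subst this
          rw [sub_zero] at hcase heps
          rw [hv0] at hcase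
          linarith
      have hr1pos : 0 < N u := lt_of_lt_of_le hr2pos huv
      -- u' = (r2/r1) • u
      have hNu' : N ((N v / N u) • u) = N v := by
        rw [hhom, abs_of_nonneg (by positivity), div_mul_cancel₀]
        exact ne_of_gt hr1pos
      have hdiff : N (u - (N v / N u) • u) = N u - N v := by
        have he : u - (N v / N u) • u = (1 - N v / N u) • u := by
          rw [sub_smul, one_smul]
        rw [he, hhom, abs_of_nonneg, sub_mul, one_mul, div_mul_cancel₀]
        · exact ne_of_gt hr1pos
        · rw [sub_nonneg, div_le_one hr1pos]; exact huv
      have heps' : N (u - v) - (N u - N v) ≤ N ((N v / N u) • u - v) := by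
        have h1 : N (u - v) ≤ N (u - (N v / N u) • u) + N ((N v / N u) • u - v) := by
          have := hsub (u - (N v / N u) • u) ((N v / N u) • u - v)
          simpa using this
        rw [hdiff] at h1
        linarith
      have hd4 : N u - N v < N (u - v) / 4 := by linarith
      have hε'pos : 0 < N ((N v / N u) • u - v) := by
        have : (3/4) * N (u - v) ≤ N ((N v / N u) • u - v) := by linarith
        linarith
      have hε'le : N ((N v / N u) • u - v) ≤ 2 * N v := by
        have h := hsub ((N v / N u) • u) (-v)
        rw [hNneg, hNu'] at h
        rw [← sub_eq_add_neg] at h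
        linarith
      -- apply modulus at scale N v
      have hmodapp := hmod' (N ((N v / N u) • u - v) / N v)
        ⟨by positivity, by rw [div_le_iff₀ hr2pos]; linarith⟩
        ((N v)⁻¹ • ((N v / N u) • u)) ((N v)⁻¹ • v)
        (by rw [hhom, abs_of_nonneg (by positivity), hNu', inv_mul_cancel₀ (ne_of_gt hr2pos)])
        (by rw [hhom, abs_of_nonneg (by positivity), inv_mul_cancel₀ (ne_of_gt hr2pos)])
        (by
          rw [← smul_sub, hhom, abs_of_nonneg (by positivity), div_eq_inv_mul])
      -- rewrite midpoint
      have hmid' : N ((2⁻¹:ℝ) • ((N v)⁻¹ • ((N v / N u) • u) + (N v)⁻¹ • v))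
          = (N v)⁻¹ * N ((2⁻¹:ℝ) • ((N v / N u) • u + v)) := by
        rw [← smul_add, smul_comm, hhom (N v)⁻¹, abs_of_nonneg (by positivity)]
      rw [hmid'] at hmodapp
      -- multiply out: a' * ε'^2 ≤ r2^2 - r2 * m'
      have h1 : a' * (N ((N v / N u) • u - v))^2
          ≤ (N v)^2 - (N v) * N ((2⁻¹:ℝ) • ((N v / N u) • u + v)) := by
        have hmul := mul_le_mul_of_nonneg_left hmodapp (le_of_lt (by positivity : (0:ℝ) < (N v)^2))
        have e1 : (N v)^2 * (a' * (N ((N v / N u) • u - v) / N v) ^ 2)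
            = a' * (N ((N v / N u) • u - v))^2 := by
          field_simp
          try ring
        have e2 : (N v)^2 * (1 - (N v)⁻¹ * N ((2⁻¹:ℝ) • ((N v / N u) • u + v)))
            = (N v)^2 - (N v) * N ((2⁻¹:ℝ) • ((N v / N u) • u + v)) := by
          field_simp
          try ring
        rw [e1, e2] at hmul
        exact hmul
      have hm'le : N ((2⁻¹:ℝ) • ((N v / N u) • u + v)) ≤ N v := by
        rw [hhom, abs_of_pos (by norm_num : (0:ℝ) < 2⁻¹)]
        have := hsub ((N v / N u) • u) v
        rw [hNu'] at this
        linarith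
      have hm'nn : 0 ≤ N ((2⁻¹:ℝ) • ((N v / N u) • u + v)) := hNnn _
      -- m ≤ m' + d
      have hmm' : N ((2⁻¹:ℝ) • (u + v)) ≤ N ((2⁻¹:ℝ) • ((N v / N u) • u + v))
          + (N u - N v)/2 := by
        have he : (2⁻¹:ℝ) • (u + v) = (2⁻¹:ℝ) • ((N v / N u) • u + v)
            + (2⁻¹:ℝ) • (u - (N v / N u) • u) := by
          module
        rw [he]
        refine le_trans (hsub _ _) ?_
        rw [hhom (2⁻¹:ℝ) (u - (N v / N u) • u), hdiff,
          abs_of_pos (by norm_num : (0:ℝ) < 2⁻¹)]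
        linarith
      have h34 : (3/4) * N (u - v) ≤ N ((N v / N u) • u - v) := by linarith
      exact aux_scalar_caseB ha' ha4 hc1 hc0.le hr2pos huv heps0 hmnn hm'nn h34 hε'le h1
        hm'le hmm'
  intro u v
  rcases le_total (N v) (N u) with h | h
  · exact key u v h
  · have hk := key v u h
    have e1 : N (v - u) = N (u - v) := by
      rw [← hNneg (u - v)]; congr 1; abel
    have e2 : ((2⁻¹:ℝ) • (v + u)) = ((2⁻¹:ℝ) • (u + v)) := by rw [add_comm]
    rw [e1, e2] at hk
    linarith


lemma aux_block {s1 s2 sm w e : ℝ} (hsm : 0 ≤ sm)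
    (hmid : sm ≤ (s1 + s2)/2) (hw : 0 ≤ w) (hwle : w ≤ (s1 + s2)/2) (he : 0 ≤ e)
    (hele : e ≤ (s1 + s2)/2 - sm) :
    w * e ≤ (s1^2 + s2^2)/2 - sm^2 := by
  have h1 : w * e ≤ ((s1 + s2)/2) * ((s1 + s2)/2 - sm) :=
    mul_le_mul hwle hele he (by linarith)
  nlinarith [sq_nonneg (s1 - s2), mul_nonneg hsm (sub_nonneg.2 hmid)]

lemma aux_absdiff {α γ p e : ℝ} (hα : 0 ≤ α) (hγ : 0 ≤ γ) (hαp : α ≤ p) (hγp : γ ≤ p)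
    (hdiff : γ - α ≤ e) (he : 0 ≤ e) : γ^2 - α^2 ≤ 2 * p * e := by
  rcases le_or_gt γ α with h | h
  · have h1 : γ^2 ≤ α^2 := pow_le_pow_left₀ hγ h 2
    have hp : 0 ≤ p := le_trans hα hαp
    have h2 : 0 ≤ 2 * p * e := mul_nonneg (by linarith) he
    linarith
  · nlinarith [mul_le_mul hdiff (by linarith : γ + α ≤ 2*p) (by linarith) he]

lemma aux_midpoint_le {X : Type*} [NormedAddCommGroup X] [NormedSpace ℝ X]
    {C : Set X} {u : X → ℝ} (hu : ConvexOn ℝ C u) {x y : X} (hx : x ∈ C) (hy : y ∈ C) :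
    u ((2⁻¹:ℝ) • (x + y)) ≤ (u x + u y)/2 := by
  have h := hu.2 hx hy (by norm_num : (0:ℝ) ≤ 2⁻¹) (by norm_num : (0:ℝ) ≤ 2⁻¹) (by norm_num)
  rw [smul_add]
  simp only [smul_eq_mul] at h
  linarith

lemma aux_mid_mem {X : Type*} [NormedAddCommGroup X] [NormedSpace ℝ X]
    {C : Set X} (hC : Convex ℝ C) {x y : X} (hx : x ∈ C) (hy : y ∈ C) :
    (2⁻¹:ℝ) • (x + y) ∈ C := by
  rw [smul_add]
  exact hC hx hy (by norm_num) (by norm_num) (by norm_num)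

lemma aux_dual_norm_le {Y : Type*} [NormedAddCommGroup Y] [NormedSpace ℝ Y]
    {N : Y → ℝ} {c₂ : ℝ} (φ : Y →L[ℝ] ℝ) (hφ : ∀ u, φ u ≤ N u)
    (hub : ∀ u, N u ≤ c₂ * ‖u‖) (hneg : ∀ u, N (-u) = N u) (hc₂ : 0 ≤ c₂) :
    ‖φ‖ ≤ c₂ := by
  refine ContinuousLinearMap.opNorm_le_bound φ hc₂ (fun u => ?_)
  rw [Real.norm_eq_abs, abs_le]
  constructor
  · have h1 := hφ (-u)
    rw [map_neg, hneg] at h1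
    have := hub u
    linarith
  · exact le_trans (hφ u) (hub u)


lemma aux_norm_dual {Y : Type*} [NormedAddCommGroup Y] [NormedSpace ℝ Y]
    {N : Y → ℝ} {c₂ : ℝ}
    (hsub : ∀ u v, N (u + v) ≤ N u + N v)
    (hhom : ∀ (a : ℝ) (u : Y), N (a • u) = |a| * N u)
    (hub : ∀ u, N u ≤ c₂ * ‖u‖) (hc₂ : 0 < c₂) (u₀ : Y) :
    ∃ φ : Y →L[ℝ] ℝ, (∀ u, φ u ≤ N u) ∧ φ u₀ = N u₀ := by
  have hN0 : N 0 = 0 := by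
    have := hhom 0 0
    simpa using this
  have hNneg : ∀ u, N (-u) = N u := by
    intro u
    have := hhom (-1) u
    simpa using this
  have hNnn : ∀ u, 0 ≤ N u := by
    intro u
    have h := hsub u (-u)
    rw [add_neg_cancel, hN0, hNneg] at h
    linarith
  rcases eq_or_ne u₀ 0 with rfl | hne
  · exact ⟨0, fun u => by simpa using hNnn u, by simp [hN0]⟩
  · set pm : Y →ₗ.[ℝ] ℝ := LinearPMap.mkSpanSingleton u₀ (N u₀) hne with hpm
    have hfle : ∀ z : pm.domain, pm z ≤ N z := by
      rintro ⟨z, hz⟩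
      have hz' : z ∈ Submodule.span ℝ ({u₀} : Set Y) := hz
      rw [Submodule.mem_span_singleton] at hz'
      obtain ⟨t, ht⟩ := hz'
      have happ : pm ⟨z, hz⟩ = t * N u₀ := by
        have : pm ⟨t • u₀, ht ▸ hz⟩ = t • N u₀ := by
          apply LinearPMap.mkSpanSingleton'_apply
        rw [smul_eq_mul] at this
        rw [← this]
        congr 1
        exact Subtype.ext ht.symm
      rw [happ]
      rcases le_or_gt 0 t with htn | htn
      · have : N z = t * N u₀ := by
          rw [← ht, hhom, abs_of_nonneg htn]
        rw [this]
      · have h1 : t * N u₀ ≤ 0 := mul_nonpos_of_nonpos_of_nonneg htn.le (hNnn u₀)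
        exact le_trans h1 (hNnn z)
    obtain ⟨g, hg1, hg2⟩ := exists_extension_of_le_sublinear pm N
      (fun c hc x => by rw [hhom, abs_of_pos hc]) hsub hfle
    have hgu₀ : g u₀ = N u₀ := by
      have hmem : u₀ ∈ pm.domain := Submodule.mem_span_singleton_self u₀
      have := hg1 ⟨u₀, hmem⟩
      rw [this]
      exact LinearPMap.mkSpanSingleton_apply ℝ ℝ hne (N u₀)
    have hbound : ∀ x, ‖g x‖ ≤ c₂ * ‖x‖ := by
      intro x
      rw [Real.norm_eq_abs, abs_le]
      constructor
      · have h1 := hg2 (-x)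
        rw [map_neg, hNneg] at h1
        have := hub x
        linarith
      · exact le_trans (hg2 x) (hub x)
    exact ⟨g.mkContinuous c₂ hbound, fun u => hg2 u, hgu₀⟩

lemma aux_P_convex {X Y : Type*} [NormedAddCommGroup X] [NormedSpace ℝ X]
    [NormedAddCommGroup Y] [NormedSpace ℝ Y]
    {C : Set X} (hCconv : Convex ℝ C) {F : X → Y} {f : X → ℝ}
    (hctrl : ∀ φ : Y →L[ℝ] ℝ, ‖φ‖ ≤ 1 → ConvexOn ℝ C (fun x => φ (F x) + f x))
    {N : Y → ℝ} {c₂ : ℝ}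
    (hsub : ∀ u v, N (u + v) ≤ N u + N v)
    (hhom : ∀ (t : ℝ) (u : Y), N (t • u) = |t| * N u)
    (hub : ∀ u, N u ≤ c₂ * ‖u‖) (hc₂ : 0 < c₂) :
    ConvexOn ℝ C (fun x => N (F x) + c₂ * f x) := by
  have hneg : ∀ u, N (-u) = N u := fun u => by have := hhom (-1) u; simpa using this
  refine ⟨hCconv, fun x hx y hy α β hα hβ hαβ => ?_⟩
  obtain ⟨φ, hφle, hφeq⟩ := aux_norm_dual hsub hhom hub hc₂ (F (α • x + β • y))
  have hnorm : ‖φ‖ ≤ c₂ := aux_dual_norm_le φ hφle hub hneg hc₂.le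
  have hnorm1 : ‖(c₂⁻¹ : ℝ) • φ‖ ≤ 1 := by
    refine le_trans (ContinuousLinearMap.opNorm_smul_le _ _) ?_
    rw [Real.norm_eq_abs, abs_of_pos (by positivity)]
    rw [inv_mul_le_iff₀ hc₂, mul_one]
    exact hnorm
  have hcv := (hctrl _ hnorm1).2 hx hy hα hβ hαβ
  simp only [ContinuousLinearMap.smul_apply, smul_eq_mul] at hcv
  -- hcv : c₂⁻¹ * φ (F (α•x+β•y)) + f (α•x+β•y) ≤ α*(c₂⁻¹*φ(F x) + f x) + β*(...)
  have hkey := mul_le_mul_of_nonneg_left hcv hc₂.le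
  have hne : c₂ ≠ 0 := ne_of_gt hc₂
  calc N (F (α • x + β • y)) + c₂ * f (α • x + β • y)
      = c₂ * (c₂⁻¹ * φ (F (α • x + β • y)) + f (α • x + β • y)) := by
        rw [← hφeq]; field_simp
    _ ≤ c₂ * (α * (c₂⁻¹ * φ (F x) + f x) + β * (c₂⁻¹ * φ (F y) + f y)) := hkey
    _ = α * (φ (F x) + c₂ * f x) + β * (φ (F y) + c₂ * f y) := by field_simp
    _ ≤ α • (N (F x) + c₂ * f x) + β • (N (F y) + c₂ * f y) := by
        simp only [smul_eq_mul]
        have h1 : φ (F x) ≤ N (F x) := hφle _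
        have h2 : φ (F y) ≤ N (F y) := hφle _
        nlinarith [mul_le_mul_of_nonneg_left h1 hα, mul_le_mul_of_nonneg_left h2 hβ]

lemma aux_eF {X Y : Type*} [NormedAddCommGroup X] [NormedSpace ℝ X]
    [NormedAddCommGroup Y] [NormedSpace ℝ Y]
    {C : Set X} {F : X → Y} {f : X → ℝ}
    (hctrl : ∀ φ : Y →L[ℝ] ℝ, ‖φ‖ ≤ 1 → ConvexOn ℝ C (fun x => φ (F x) + f x))
    {x y : X} (hx : x ∈ C) (hy : y ∈ C) (hm : (2⁻¹:ℝ) • (x + y) ∈ C) :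
    ‖(2⁻¹:ℝ) • (F x + F y) - F ((2⁻¹:ℝ) • (x + y))‖
      ≤ (f x + f y)/2 - f ((2⁻¹:ℝ) • (x + y)) := by
  have hmidφ : ∀ φ : Y →L[ℝ] ℝ, ‖φ‖ ≤ 1 →
      φ (F ((2⁻¹:ℝ) • (x + y))) - φ ((2⁻¹:ℝ) • (F x + F y))
        ≤ (f x + f y)/2 - f ((2⁻¹:ℝ) • (x + y)) := by
    intro φ hφ
    have h := aux_midpoint_le (hctrl φ hφ) hx hy
    rw [map_smul, map_add]
    simp only [smul_eq_mul]
    linarith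
  rcases eq_or_ne ((2⁻¹:ℝ) • (F x + F y) - F ((2⁻¹:ℝ) • (x + y))) 0 with h0 | h0
  · rw [h0, norm_zero]
    have := hmidφ 0 (by simp)
    simpa using this
  · obtain ⟨φ, hφ1, hφeq⟩ := exists_dual_vector ℝ _ (norm_ne_zero_iff.mpr h0)
    have := hmidφ (-φ) (by rw [norm_neg]; exact le_of_eq hφ1)
    simp only [ContinuousLinearMap.neg_apply] at this
    have heq : φ ((2⁻¹:ℝ) • (F x + F y)) - φ (F ((2⁻¹:ℝ) • (x + y)))
        = ‖(2⁻¹:ℝ) • (F x + F y) - F ((2⁻¹:ℝ) • (x + y))‖ := by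
      rw [← map_sub]
      exact_mod_cast hφeq
    linarith


lemma aux_norm_mid {Y : Type*} [NormedAddCommGroup Y] [NormedSpace ℝ Y]
    {N : Y → ℝ} (hsub : ∀ u v, N (u + v) ≤ N u + N v)
    (hhom : ∀ (t : ℝ) (u : Y), N (t • u) = |t| * N u) (u v : Y) :
    N ((2⁻¹:ℝ) • (u + v)) ≤ (N u + N v)/2 := by
  rw [hhom, abs_of_pos (by norm_num : (0:ℝ) < 2⁻¹)]
  linarith [hsub u v]

lemma aux_norm_lipd {Y : Type*} [NormedAddCommGroup Y] [NormedSpace ℝ Y]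
    {N : Y → ℝ} {c₂ : ℝ} (hsub : ∀ u v, N (u + v) ≤ N u + N v)
    (hub : ∀ u, N u ≤ c₂ * ‖u‖) (u v : Y) :
    N u - N v ≤ c₂ * ‖u - v‖ := by
  have h1 := hsub v (u - v)
  rw [add_sub_cancel] at h1
  linarith [hub (u - v)]

lemma aux_N_continuous {Y : Type*} [NormedAddCommGroup Y] [NormedSpace ℝ Y]
    {N : Y → ℝ} {c₂ : ℝ} (hsub : ∀ u v, N (u + v) ≤ N u + N v)
    (hhom : ∀ (t : ℝ) (u : Y), N (t • u) = |t| * N u)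
    (hub : ∀ u, N u ≤ c₂ * ‖u‖) (hc₂ : 0 < c₂) :
    Continuous N := by
  have hneg : ∀ u, N (-u) = N u := fun u => by have := hhom (-1) u; simpa using this
  have : LipschitzWith (Real.toNNReal c₂) N := by
    apply LipschitzWith.of_dist_le_mul
    intro u v
    rw [Real.dist_eq, dist_eq_norm, Real.coe_toNNReal _ hc₂.le, abs_le]
    constructor
    · have := aux_norm_lipd hsub hub v u
      rw [← norm_neg, neg_sub] at this
      linarith
    · exact aux_norm_lipd hsub hub u v
  exact this.continuous

lemma aux_block' {s1 s2 sm w e : ℝ} (hsm : 0 ≤ sm)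
    (hmid : sm ≤ (s1 + s2)/2) (hw : 0 ≤ w) (hwle : w ≤ (s1 + s2)/2) (he : 0 ≤ e)
    (hele : e ≤ (s1 + s2)/2 - sm) :
    w * e ≤ (s1^2 + s2^2)/2 - sm^2 := by
  have h1 : w * e ≤ ((s1 + s2)/2) * ((s1 + s2)/2 - sm) :=
    mul_le_mul hwle hele he (by linarith)
  nlinarith [sq_nonneg (s1 - s2), mul_nonneg hsm (sub_nonneg.2 hmid)]

lemma aux_absdiff' {α γ p e : ℝ} (hα : 0 ≤ α) (hγ : 0 ≤ γ) (hαp : α ≤ p) (hγp : γ ≤ p)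
    (hdiff : γ - α ≤ e) (he : 0 ≤ e) : γ^2 - α^2 ≤ 2 * p * e := by
  rcases le_or_gt γ α with h | h
  · have h1 : γ^2 ≤ α^2 := pow_le_pow_left₀ hγ h 2
    have hp : 0 ≤ p := le_trans hα hαp
    have h2 : 0 ≤ 2 * p * e := mul_nonneg (by linarith) he
    linarith
  · nlinarith [mul_le_mul hdiff (by linarith : γ + α ≤ 2*p) (by linarith) he]

lemma aux_amgm {k dF dG : ℝ} (hk : 0 ≤ k) :
    k * (2⁻¹*dF) * (2⁻¹*dG) ≤ k/8 * dF^2 + k/8 * dG^2 := by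
  nlinarith [mul_nonneg hk (sq_nonneg (dF - dG))]

set_option maxHeartbeats 1000000 in
lemma aux_final {c₁ c₂ d₁ d₂ cN cM κ : ℝ}
    {nfx nfy nfm nf eF fx fy fm dF ndF nFm : ℝ}
    {mgx mgy mgm mg eG gx gy gm dG mdG nGb : ℝ}
    {ψx ψy ψm : ℝ}
    (hc₁ : 0 < c₁) (hc₂ : 0 < c₂) (hd₁ : 0 < d₁) (hd₂ : 0 < d₂)
    (hcN : 0 < cN) (hcM : 0 < cM) (hκ : 0 ≤ κ)
    (heF0 : 0 ≤ eF) (heG0 : 0 ≤ eG)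
    (heF : eF ≤ (fx + fy)/2 - fm) (heG : eG ≤ (gx + gy)/2 - gm)
    (hPmid : nfm + c₂ * fm ≤ ((nfx + c₂ * fx) + (nfy + c₂ * fy))/2)
    (hQmid : mgm + d₂ * gm ≤ ((mgx + d₂ * gx) + (mgy + d₂ * gy))/2)
    (hfx : 0 ≤ fx) (hfy : 0 ≤ fy) (hfm : 0 ≤ fm)
    (hgx : 0 ≤ gx) (hgy : 0 ≤ gy) (hgm : 0 ≤ gm)
    (hnfx : 0 ≤ nfx) (hnfy : 0 ≤ nfy) (hnfm : 0 ≤ nfm) (hnf : 0 ≤ nf)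
    (hmgx : 0 ≤ mgx) (hmgy : 0 ≤ mgy) (hmgm : 0 ≤ mgm) (hmg : 0 ≤ mg)
    (hnfmid : nf ≤ (nfx + nfy)/2) (hmgmid : mg ≤ (mgx + mgy)/2)
    (hnflip : nfm - nf ≤ c₂ * eF) (hmglip : mgm - mg ≤ d₂ * eG)
    (hFmb : c₁ * nFm ≤ nfm) (hGbb : d₁ * nGb ≤ mg)
    (hnFm0 : 0 ≤ nFm) (hnGb0 : 0 ≤ nGb) (hdF0 : 0 ≤ dF) (hdG0 : 0 ≤ dG)
    (hunifF : nf^2 + cN * ndF^2 ≤ (nfx^2 + nfy^2)/2)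
    (hunifG : mg^2 + cM * mdG^2 ≤ (mgx^2 + mgy^2)/2)
    (hndF : c₁^2 * dF^2 ≤ ndF^2) (hmdG : d₁^2 * dG^2 ≤ mdG^2)
    (hψ : ψm - (ψx + ψy)/2 ≤ κ * eF * nGb + κ * nFm * eG + κ * (2⁻¹*dF) * (2⁻¹*dG)) :
    ψm + (κ/(c₂*d₁) * (c₂*fm + (mgm + d₂*gm))^2 + κ/(d₂*c₁) * (d₂*gm + (nfm + c₂*fm))^2
      + κ/(8*c₁^2*cN) * (nfm^2 + 2*(c₂*fm + (nfm + c₂*fm))^2)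
      + κ/(8*d₁^2*cM) * (mgm^2 + 2*(d₂*gm + (mgm + d₂*gm))^2))
    ≤ ((ψx + (κ/(c₂*d₁) * (c₂*fx + (mgx + d₂*gx))^2 + κ/(d₂*c₁) * (d₂*gx + (nfx + c₂*fx))^2
      + κ/(8*c₁^2*cN) * (nfx^2 + 2*(c₂*fx + (nfx + c₂*fx))^2)
      + κ/(8*d₁^2*cM) * (mgx^2 + 2*(d₂*gx + (mgx + d₂*gx))^2)))
      + (ψy + (κ/(c₂*d₁) * (c₂*fy + (mgy + d₂*gy))^2 + κ/(d₂*c₁) * (d₂*gy + (nfy + c₂*fy))^2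
      + κ/(8*c₁^2*cN) * (nfy^2 + 2*(c₂*fy + (nfy + c₂*fy))^2)
      + κ/(8*d₁^2*cM) * (mgy^2 + 2*(d₂*gy + (mgy + d₂*gy))^2))))/2 := by
  have hdf : 0 ≤ (fx + fy)/2 - fm := le_trans heF0 heF
  have hdg : 0 ≤ (gx + gy)/2 - gm := le_trans heG0 heG
  have hc₂f := mul_le_mul_of_nonneg_left (show fm ≤ (fx + fy)/2 by linarith) hc₂.le
  have hd₂g := mul_le_mul_of_nonneg_left (show gm ≤ (gx + gy)/2 by linarith) hd₂.le
  have hc₂eF := mul_le_mul_of_nonneg_left heF hc₂.le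
  have hd₂eG := mul_le_mul_of_nonneg_left heG hd₂.le
  have hc₂fx := mul_nonneg hc₂.le hfx
  have hc₂fy := mul_nonneg hc₂.le hfy
  have hc₂fm := mul_nonneg hc₂.le hfm
  have hd₂gx := mul_nonneg hd₂.le hgx
  have hd₂gy := mul_nonneg hd₂.le hgy
  have hd₂gm := mul_nonneg hd₂.le hgm
  -- Block 1
  have hB1 : (d₁*nGb) * (c₂*eF)
      ≤ ((c₂*fx + (mgx + d₂*gx))^2 + (c₂*fy + (mgy + d₂*gy))^2)/2
        - (c₂*fm + (mgm + d₂*gm))^2 := by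
    apply aux_block'
    · linarith
    · linarith [hQmid]
    · exact mul_nonneg hd₁.le hnGb0
    · linarith [hGbb, hmgmid]
    · exact mul_nonneg hc₂.le heF0
    · linarith [hQmid]
  -- Block 2
  have hB2 : (c₁*nFm) * (d₂*eG)
      ≤ ((d₂*gx + (nfx + c₂*fx))^2 + (d₂*gy + (nfy + c₂*fy))^2)/2
        - (d₂*gm + (nfm + c₂*fm))^2 := by
    apply aux_block'
    · linarith
    · linarith [hPmid]
    · exact mul_nonneg hc₁.le hnFm0
    · linarith [hFmb, hPmid]
    · exact mul_nonneg hd₂.le heG0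
    · linarith [hPmid]
  -- Block 3
  have hS3mid : c₂*fm + (nfm + c₂*fm)
      ≤ ((c₂*fx + (nfx + c₂*fx)) + (c₂*fy + (nfy + c₂*fy)))/2 := by
    linarith [hPmid]
  have habsF : nfm^2 - nf^2
      ≤ 2 * (((c₂*fx + (nfx + c₂*fx)) + (c₂*fy + (nfy + c₂*fy)))/2) * (c₂*eF) := by
    apply aux_absdiff' hnf hnfm
    · linarith [hnfmid]
    · linarith [hS3mid]
    · exact hnflip
    · exact mul_nonneg hc₂.le heF0
  have hblk3 : (((c₂*fx + (nfx + c₂*fx)) + (c₂*fy + (nfy + c₂*fy)))/2) * (c₂*eF)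
      ≤ ((c₂*fx + (nfx + c₂*fx))^2 + (c₂*fy + (nfy + c₂*fy))^2)/2
        - (c₂*fm + (nfm + c₂*fm))^2 := by
    apply aux_block'
    · linarith
    · exact hS3mid
    · linarith
    · exact le_refl _
    · exact mul_nonneg hc₂.le heF0
    · linarith [hPmid]
  have hcomb3 : cN * (c₁^2 * dF^2)
      ≤ (nfx^2 + nfy^2)/2 - nfm^2
        + 2*(((c₂*fx + (nfx + c₂*fx))^2 + (c₂*fy + (nfy + c₂*fy))^2)/2
          - (c₂*fm + (nfm + c₂*fm))^2) := by
    have h1 := mul_le_mul_of_nonneg_left hndF hcN.le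
    linarith [hunifF, habsF, hblk3, h1]
  -- Block 4
  have hS4mid : d₂*gm + (mgm + d₂*gm)
      ≤ ((d₂*gx + (mgx + d₂*gx)) + (d₂*gy + (mgy + d₂*gy)))/2 := by
    linarith [hQmid]
  have habsG : mgm^2 - mg^2
      ≤ 2 * (((d₂*gx + (mgx + d₂*gx)) + (d₂*gy + (mgy + d₂*gy)))/2) * (d₂*eG) := by
    apply aux_absdiff' hmg hmgm
    · linarith [hmgmid]
    · linarith [hS4mid]
    · exact hmglip
    · exact mul_nonneg hd₂.le heG0
  have hblk4 : (((d₂*gx + (mgx + d₂*gx)) + (d₂*gy + (mgy + d₂*gy)))/2) * (d₂*eG)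
      ≤ ((d₂*gx + (mgx + d₂*gx))^2 + (d₂*gy + (mgy + d₂*gy))^2)/2
        - (d₂*gm + (mgm + d₂*gm))^2 := by
    apply aux_block'
    · linarith
    · exact hS4mid
    · linarith
    · exact le_refl _
    · exact mul_nonneg hd₂.le heG0
    · linarith [hQmid]
  have hcomb4 : cM * (d₁^2 * dG^2)
      ≤ (mgx^2 + mgy^2)/2 - mgm^2
        + 2*(((d₂*gx + (mgx + d₂*gx))^2 + (d₂*gy + (mgy + d₂*gy))^2)/2
          - (d₂*gm + (mgm + d₂*gm))^2) := by
    have h1 := mul_le_mul_of_nonneg_left hmdG hcM.le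
    linarith [hunifG, habsG, hblk4, h1]
  -- coefficient conversions
  have hk1 : κ * (eF * nGb) ≤ κ/(c₂*d₁)
      * (((c₂*fx + (mgx + d₂*gx))^2 + (c₂*fy + (mgy + d₂*gy))^2)/2
        - (c₂*fm + (mgm + d₂*gm))^2) := by
    have e : κ/(c₂*d₁) * ((d₁*nGb) * (c₂*eF)) = κ * (eF * nGb) := by
      field_simp
    rw [← e]
    exact mul_le_mul_of_nonneg_left hB1 (by positivity)
  have hk2 : κ * (nFm * eG) ≤ κ/(d₂*c₁)
      * (((d₂*gx + (nfx + c₂*fx))^2 + (d₂*gy + (nfy + c₂*fy))^2)/2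
        - (d₂*gm + (nfm + c₂*fm))^2) := by
    have e : κ/(d₂*c₁) * ((c₁*nFm) * (d₂*eG)) = κ * (nFm * eG) := by
      field_simp
    rw [← e]
    exact mul_le_mul_of_nonneg_left hB2 (by positivity)
  have hk3 : κ/8 * dF^2 ≤ κ/(8*c₁^2*cN)
      * ((nfx^2 + nfy^2)/2 - nfm^2
        + 2*(((c₂*fx + (nfx + c₂*fx))^2 + (c₂*fy + (nfy + c₂*fy))^2)/2
          - (c₂*fm + (nfm + c₂*fm))^2)) := by
    have e : κ/(8*c₁^2*cN) * (cN * (c₁^2 * dF^2)) = κ/8 * dF^2 := by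
      field_simp
    rw [← e]
    exact mul_le_mul_of_nonneg_left hcomb3 (by positivity)
  have hk4 : κ/8 * dG^2 ≤ κ/(8*d₁^2*cM)
      * ((mgx^2 + mgy^2)/2 - mgm^2
        + 2*(((d₂*gx + (mgx + d₂*gx))^2 + (d₂*gy + (mgy + d₂*gy))^2)/2
          - (d₂*gm + (mgm + d₂*gm))^2)) := by
    have e : κ/(8*d₁^2*cM) * (cM * (d₁^2 * dG^2)) = κ/8 * dG^2 := by
      field_simp
    rw [← e]
    exact mul_le_mul_of_nonneg_left hcomb4 (by positivity)
  have hAM : κ * (2⁻¹*dF) * (2⁻¹*dG) ≤ κ/8 * dF^2 + κ/8 * dG^2 := aux_amgm hκ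
  linarith [hψ, hk1, hk2, hk3, hk4, hAM]

set_option maxHeartbeats 4000000 in
/-- a continuous bilinear "product" of two d.c. mappings is d.c.,
provided both intermediate spaces admit equivalent norms with modulus of convexity of
power type 2. -/
theorem dc_bilinear_product {X Y V Z : Type*}
    [NormedAddCommGroup X] [NormedSpace ℝ X]
    [NormedAddCommGroup Y] [NormedSpace ℝ Y]
    [NormedAddCommGroup V] [NormedSpace ℝ V]
    [NormedAddCommGroup Z] [NormedSpace ℝ Z]
    (C : Set X) (hCopen : IsOpen C) (hCconv : Convex ℝ C)
    (F : X → Y) (hF : IsDCOn C F) (G : X → V) (hG : IsDCOn C G)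
    (B : Y →L[ℝ] V →L[ℝ] Z)
    (hY : ∃ N : Y → ℝ, IsEquivNormPT2 N) (hV : ∃ N : V → ℝ, IsEquivNormPT2 N) :
    IsDCOn C (fun x => B (F x) (G x)) := by
  obtain ⟨hFcont, f0, hf0cont, hf0ctrl⟩ := hF
  obtain ⟨hGcont, g0, hg0cont, hg0ctrl⟩ := hG
  have hHcont : ContinuousOn (fun x => B (F x) (G x)) C :=
    by have := B.continuous₂.comp_continuousOn (hFcont.prodMk hGcont); exact this
  refine ⟨hHcont, ?_⟩
  rcases C.eq_empty_or_nonempty with rfl | ⟨x₀, hx₀⟩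
  · exact ⟨0, continuousOn_empty _,
      fun φ _ => ⟨convex_empty, fun x hx => absurd hx (Set.notMem_empty x)⟩⟩
  obtain ⟨N, hNsub, hNhom, ⟨c₁, c₂, hc₁, hc₂, hNb⟩, aY, haY, hNmod⟩ := hY
  obtain ⟨M, hMsub, hMhom, ⟨d₁, d₂, hd₁, hd₂, hMb⟩, aV, haV, hMmod⟩ := hV
  have hNlb : ∀ u, c₁ * ‖u‖ ≤ N u := fun u => (hNb u).1
  have hNub : ∀ u, N u ≤ c₂ * ‖u‖ := fun u => (hNb u).2
  have hMlb : ∀ u, d₁ * ‖u‖ ≤ M u := fun u => (hMb u).1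
  have hMub : ∀ u, M u ≤ d₂ * ‖u‖ := fun u => (hMb u).2
  have hNnn : ∀ u, 0 ≤ N u := fun u => le_trans (by positivity) (hNlb u)
  have hMnn : ∀ u, 0 ≤ M u := fun u => le_trans (by positivity) (hMlb u)
  obtain ⟨cN, hcN, hNunif⟩ := aux_two_uniform hNsub hNhom hNlb hc₁ haY hNmod
  obtain ⟨cM, hcM, hMunif⟩ := aux_two_uniform hMsub hMhom hMlb hd₁ haV hMmod
  have hf0conv : ConvexOn ℝ C f0 := by have := hf0ctrl 0 (by simp); simpa using this
  have hg0conv : ConvexOn ℝ C g0 := by have := hg0ctrl 0 (by simp); simpa using this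
  obtain ⟨φf, cf, hφf⟩ := aux_affine_minorant hCopen hf0conv hf0cont hx₀
  obtain ⟨φg, cg, hφg⟩ := aux_affine_minorant hCopen hg0conv hg0cont hx₀
  obtain ⟨f', hf'def⟩ : ∃ f' : X → ℝ, f' = fun z => f0 z - (φf z + cf) := ⟨_, rfl⟩
  obtain ⟨g', hg'def⟩ : ∃ g' : X → ℝ, g' = fun z => g0 z - (φg z + cg) := ⟨_, rfl⟩
  have hf'nn : ∀ z ∈ C, 0 ≤ f' z := by
    intro z hz; rw [hf'def]; have := hφf z hz; simp only; linarith
  have hg'nn : ∀ z ∈ C, 0 ≤ g' z := by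
    intro z hz; rw [hg'def]; have := hφg z hz; simp only; linarith
  have hf'cont : ContinuousOn f' C := by
    rw [hf'def]; exact hf0cont.sub (Continuous.continuousOn (by fun_prop))
  have hg'cont : ContinuousOn g' C := by
    rw [hg'def]; exact hg0cont.sub (Continuous.continuousOn (by fun_prop))
  have hf'ctrl : ∀ φ : Y →L[ℝ] ℝ, ‖φ‖ ≤ 1 → ConvexOn ℝ C fun z => φ (F z) + f' z := by
    intro φ hφ
    have h1 := hf0ctrl φ hφ
    have h2 : ConvexOn ℝ C (fun z => -(φf z + cf)) := by
      refine ⟨hCconv, fun u hu v hv α β hα hβ hαβ => ?_⟩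
      simp only [map_add, map_smul, smul_eq_mul]
      have hc : α * cf + β * cf = cf := by rw [← add_mul, hαβ, one_mul]
      linarith
    have heq : (fun z => φ (F z) + f' z) = fun z => (φ (F z) + f0 z) + -(φf z + cf) := by
      funext z; rw [hf'def]; ring
    rw [heq]; exact h1.add h2
  have hg'ctrl : ∀ φ : V →L[ℝ] ℝ, ‖φ‖ ≤ 1 → ConvexOn ℝ C fun z => φ (G z) + g' z := by
    intro φ hφ
    have h1 := hg0ctrl φ hφ
    have h2 : ConvexOn ℝ C (fun z => -(φg z + cg)) := by
      refine ⟨hCconv, fun u hu v hv α β hα hβ hαβ => ?_⟩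
      simp only [map_add, map_smul, smul_eq_mul]
      have hc : α * cg + β * cg = cg := by rw [← add_mul, hαβ, one_mul]
      linarith
    have heq : (fun z => φ (G z) + g' z) = fun z => (φ (G z) + g0 z) + -(φg z + cg) := by
      funext z; rw [hg'def]; ring
    rw [heq]; exact h1.add h2
  have hf'conv : ConvexOn ℝ C f' := by have := hf'ctrl 0 (by simp); simpa using this
  have hg'conv : ConvexOn ℝ C g' := by have := hg'ctrl 0 (by simp); simpa using this
  have hPconv : ConvexOn ℝ C (fun z => N (F z) + c₂ * f' z) :=
    aux_P_convex hCconv hf'ctrl hNsub hNhom hNub hc₂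
  have hQconv : ConvexOn ℝ C (fun z => M (G z) + d₂ * g' z) :=
    aux_P_convex hCconv hg'ctrl hMsub hMhom hMub hd₂
  have hNcont := aux_N_continuous hNsub hNhom hNub hc₂
  have hMcont := aux_N_continuous hMsub hMhom hMub hd₂
  have hNF : ContinuousOn (fun z => N (F z)) C := hNcont.comp_continuousOn hFcont
  have hMG : ContinuousOn (fun z => M (G z)) C := hMcont.comp_continuousOn hGcont
  obtain ⟨h, hhdef⟩ : ∃ h : X → ℝ, h = fun z =>
      ‖B‖/(c₂*d₁) * (c₂ * f' z + (M (G z) + d₂ * g' z))^2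
      + ‖B‖/(d₂*c₁) * (d₂ * g' z + (N (F z) + c₂ * f' z))^2
      + ‖B‖/(8*c₁^2*cN) * ((N (F z))^2 + 2*(c₂ * f' z + (N (F z) + c₂ * f' z))^2)
      + ‖B‖/(8*d₁^2*cM) * ((M (G z))^2 + 2*(d₂ * g' z + (M (G z) + d₂ * g' z))^2) := ⟨_, rfl⟩
  have hκ : (0:ℝ) ≤ ‖B‖ := ContinuousLinearMap.opNorm_nonneg B
  have hhcont : ContinuousOn h C := by
    rw [hhdef]
    apply ContinuousOn.add
    apply ContinuousOn.add
    apply ContinuousOn.add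
    · exact continuousOn_const.mul (((continuousOn_const.mul hf'cont).add
        (hMG.add (continuousOn_const.mul hg'cont))).pow 2)
    · exact continuousOn_const.mul (((continuousOn_const.mul hg'cont).add
        (hNF.add (continuousOn_const.mul hf'cont))).pow 2)
    · exact continuousOn_const.mul ((hNF.pow 2).add (continuousOn_const.mul
        (((continuousOn_const.mul hf'cont).add
          (hNF.add (continuousOn_const.mul hf'cont))).pow 2)))
    · exact continuousOn_const.mul ((hMG.pow 2).add (continuousOn_const.mul
        (((continuousOn_const.mul hg'cont).add
          (hMG.add (continuousOn_const.mul hg'cont))).pow 2)))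
  refine ⟨h, hhcont, ?_⟩
  intro ψ hψ
  apply aux_convexOn_of_midpoint hCconv
  · exact (ψ.continuous.comp_continuousOn hHcont).add hhcont
  intro x hx y hy
  have hmC : (2⁻¹:ℝ) • (x + y) ∈ C := aux_mid_mem hCconv hx hy
  -- side quantities
  have heF : ‖(2⁻¹:ℝ) • (F x + F y) - F ((2⁻¹:ℝ) • (x + y))‖
      ≤ (f' x + f' y)/2 - f' ((2⁻¹:ℝ) • (x + y)) := aux_eF hf'ctrl hx hy hmC
  have heG : ‖(2⁻¹:ℝ) • (G x + G y) - G ((2⁻¹:ℝ) • (x + y))‖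
      ≤ (g' x + g' y)/2 - g' ((2⁻¹:ℝ) • (x + y)) := aux_eF hg'ctrl hx hy hmC
  have hPmid : N (F ((2⁻¹:ℝ) • (x + y))) + c₂ * f' ((2⁻¹:ℝ) • (x + y))
      ≤ ((N (F x) + c₂ * f' x) + (N (F y) + c₂ * f' y))/2 :=
    aux_midpoint_le hPconv hx hy
  have hQmid : M (G ((2⁻¹:ℝ) • (x + y))) + d₂ * g' ((2⁻¹:ℝ) • (x + y))
      ≤ ((M (G x) + d₂ * g' x) + (M (G y) + d₂ * g' y))/2 :=
    aux_midpoint_le hQconv hx hy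
  have hfm := hf'nn _ hmC
  have hfx := hf'nn _ hx
  have hfy := hf'nn _ hy
  have hgm := hg'nn _ hmC
  have hgx := hg'nn _ hx
  have hgy := hg'nn _ hy
  -- abbreviate
  have hNmidF : N ((2⁻¹:ℝ) • (F x + F y)) ≤ (N (F x) + N (F y))/2 :=
    aux_norm_mid hNsub hNhom _ _
  have hMmidG : M ((2⁻¹:ℝ) • (G x + G y)) ≤ (M (G x) + M (G y))/2 :=
    aux_norm_mid hMsub hMhom _ _
  have hNlip : N (F ((2⁻¹:ℝ) • (x + y))) - N ((2⁻¹:ℝ) • (F x + F y))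
      ≤ c₂ * ‖(2⁻¹:ℝ) • (F x + F y) - F ((2⁻¹:ℝ) • (x + y))‖ := by
    have := aux_norm_lipd hNsub hNub (F ((2⁻¹:ℝ) • (x + y))) ((2⁻¹:ℝ) • (F x + F y))
    rwa [← norm_neg, neg_sub] at this
  have hMlip : M (G ((2⁻¹:ℝ) • (x + y))) - M ((2⁻¹:ℝ) • (G x + G y))
      ≤ d₂ * ‖(2⁻¹:ℝ) • (G x + G y) - G ((2⁻¹:ℝ) • (x + y))‖ := by
    have := aux_norm_lipd hMsub hMub (G ((2⁻¹:ℝ) • (x + y))) ((2⁻¹:ℝ) • (G x + G y))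
    rwa [← norm_neg, neg_sub] at this
  -- bilinear identity and ψ-defect bound
  have hident : (2⁻¹:ℝ) • (B (F x) (G x)) + (2⁻¹:ℝ) • (B (F y) (G y))
        - B (F ((2⁻¹:ℝ) • (x + y))) (G ((2⁻¹:ℝ) • (x + y)))
      = B ((2⁻¹:ℝ) • (F x + F y) - F ((2⁻¹:ℝ) • (x + y))) ((2⁻¹:ℝ) • (G x + G y))
        + B (F ((2⁻¹:ℝ) • (x + y)))
            ((2⁻¹:ℝ) • (G x + G y) - G ((2⁻¹:ℝ) • (x + y)))
        + B ((2⁻¹:ℝ) • (F x - F y)) ((2⁻¹:ℝ) • (G x - G y)) := by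
    simp only [map_add, map_sub, map_smul, ContinuousLinearMap.add_apply,
      ContinuousLinearMap.sub_apply, ContinuousLinearMap.smul_apply, smul_add, smul_sub]
    module
  have hbnorm : ‖(2⁻¹:ℝ) • (B (F x) (G x)) + (2⁻¹:ℝ) • (B (F y) (G y))
        - B (F ((2⁻¹:ℝ) • (x + y))) (G ((2⁻¹:ℝ) • (x + y)))‖
      ≤ ‖B‖ * ‖(2⁻¹:ℝ) • (F x + F y) - F ((2⁻¹:ℝ) • (x + y))‖
          * ‖(2⁻¹:ℝ) • (G x + G y)‖
        + ‖B‖ * ‖F ((2⁻¹:ℝ) • (x + y))‖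
          * ‖(2⁻¹:ℝ) • (G x + G y) - G ((2⁻¹:ℝ) • (x + y))‖
        + ‖B‖ * (2⁻¹ * ‖F x - F y‖) * (2⁻¹ * ‖G x - G y‖) := by
    rw [hident]
    refine le_trans (norm_add₃_le) ?_
    have e1 := B.le_opNorm₂ ((2⁻¹:ℝ) • (F x + F y) - F ((2⁻¹:ℝ) • (x + y)))
      ((2⁻¹:ℝ) • (G x + G y))
    have e2 := B.le_opNorm₂ (F ((2⁻¹:ℝ) • (x + y)))
      ((2⁻¹:ℝ) • (G x + G y) - G ((2⁻¹:ℝ) • (x + y)))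
    have e3 := B.le_opNorm₂ ((2⁻¹:ℝ) • (F x - F y)) ((2⁻¹:ℝ) • (G x - G y))
    rw [norm_smul, norm_smul, Real.norm_eq_abs,
      abs_of_pos (by norm_num : (0:ℝ) < 2⁻¹)] at e3
    linarith [e1, e2, e3]
  have hψdefect : ψ (B (F ((2⁻¹:ℝ) • (x + y))) (G ((2⁻¹:ℝ) • (x + y))))
        - (ψ (B (F x) (G x)) + ψ (B (F y) (G y)))/2
      ≤ ‖B‖ * ‖(2⁻¹:ℝ) • (F x + F y) - F ((2⁻¹:ℝ) • (x + y))‖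
          * ‖(2⁻¹:ℝ) • (G x + G y)‖
        + ‖B‖ * ‖F ((2⁻¹:ℝ) • (x + y))‖
          * ‖(2⁻¹:ℝ) • (G x + G y) - G ((2⁻¹:ℝ) • (x + y))‖
        + ‖B‖ * (2⁻¹ * ‖F x - F y‖) * (2⁻¹ * ‖G x - G y‖) := by
    have h1 : ψ ((2⁻¹:ℝ) • (B (F x) (G x)) + (2⁻¹:ℝ) • (B (F y) (G y))
          - B (F ((2⁻¹:ℝ) • (x + y))) (G ((2⁻¹:ℝ) • (x + y))))
        = 2⁻¹ * ψ (B (F x) (G x)) + 2⁻¹ * ψ (B (F y) (G y))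
          - ψ (B (F ((2⁻¹:ℝ) • (x + y))) (G ((2⁻¹:ℝ) • (x + y)))) := by
      rw [map_sub, map_add, map_smul, map_smul]
      simp [smul_eq_mul]
    have h2 := ψ.le_opNorm ((2⁻¹:ℝ) • (B (F x) (G x)) + (2⁻¹:ℝ) • (B (F y) (G y))
          - B (F ((2⁻¹:ℝ) • (x + y))) (G ((2⁻¹:ℝ) • (x + y))))
    have h3 : ‖ψ ((2⁻¹:ℝ) • (B (F x) (G x)) + (2⁻¹:ℝ) • (B (F y) (G y))
          - B (F ((2⁻¹:ℝ) • (x + y))) (G ((2⁻¹:ℝ) • (x + y))))‖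
        ≤ ‖(2⁻¹:ℝ) • (B (F x) (G x)) + (2⁻¹:ℝ) • (B (F y) (G y))
          - B (F ((2⁻¹:ℝ) • (x + y))) (G ((2⁻¹:ℝ) • (x + y)))‖ := by
      refine le_trans h2 ?_
      exact mul_le_of_le_one_left (norm_nonneg _) hψ
    rw [h1, Real.norm_eq_abs] at h3
    have h4 := neg_abs_le (2⁻¹ * ψ (B (F x) (G x)) + 2⁻¹ * ψ (B (F y) (G y))
          - ψ (B (F ((2⁻¹:ℝ) • (x + y))) (G ((2⁻¹:ℝ) • (x + y)))))
    linarith [hbnorm, h3, h4]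
  -- remaining scalar facts
  have hndF : c₁^2 * ‖F x - F y‖^2 ≤ (N (F x - F y))^2 := by
    have h1 : (c₁ * ‖F x - F y‖)^2 ≤ (N (F x - F y))^2 :=
      pow_le_pow_left₀ (by positivity) (hNlb _) 2
    rw [mul_pow] at h1
    exact h1
  have hmdG : d₁^2 * ‖G x - G y‖^2 ≤ (M (G x - G y))^2 := by
    have h1 : (d₁ * ‖G x - G y‖)^2 ≤ (M (G x - G y))^2 :=
      pow_le_pow_left₀ (by positivity) (hMlb _) 2
    rw [mul_pow] at h1
    exact h1
  -- assemble
  simp only [hhdef]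
  exact aux_final hc₁ hc₂ hd₁ hd₂ hcN hcM hκ
    (norm_nonneg ((2⁻¹:ℝ) • (F x + F y) - F ((2⁻¹:ℝ) • (x + y))))
    (norm_nonneg ((2⁻¹:ℝ) • (G x + G y) - G ((2⁻¹:ℝ) • (x + y))))
    heF heG hPmid hQmid hfx hfy hfm hgx hgy hgm
    (hNnn (F x)) (hNnn (F y)) (hNnn (F ((2⁻¹:ℝ) • (x + y))))
    (hNnn ((2⁻¹:ℝ) • (F x + F y)))
    (hMnn (G x)) (hMnn (G y)) (hMnn (G ((2⁻¹:ℝ) • (x + y))))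
    (hMnn ((2⁻¹:ℝ) • (G x + G y)))
    hNmidF hMmidG hNlip hMlip
    (hNlb (F ((2⁻¹:ℝ) • (x + y)))) (hMlb ((2⁻¹:ℝ) • (G x + G y)))
    (norm_nonneg (F ((2⁻¹:ℝ) • (x + y)))) (norm_nonneg ((2⁻¹:ℝ) • (G x + G y)))
    (norm_nonneg (F x - F y)) (norm_nonneg (G x - G y))
    (hNunif (F x) (F y)) (hMunif (G x) (G y)) hndF hmdG hψdefect
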